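/- For every total switching rate r > 0 and every solution (v₀, v₁) of the insect-respiration BVP with rates α = ρr, β = (1−ρ)r, the steady-state mean oxygen flux F = D·(v₀'(0) + v₁'(0)) satisfies the strict bounds ρ·D·c/L < F < D·c/L. That is, the flux under stochastic gating always lies strictly between the time-averaged flux ρ·Dc/L of the two static problems and the flux Dc/L of the always-open (pure Dirichlet) problem. -/

import Mathlib

theorem sinh_lt_mul_cosh {y : ℝ} (hy : 0 < y) : Real.sinh y < y * Real.cosh y := by
  have h : StrictMonoOn (fun x : ℝ => x * Real.cosh x - Real.sinh x) (Set.Ici 0) := by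
    apply strictMonoOn_of_deriv_pos (convex_Ici _)
    · exact ((continuous_id.mul Real.continuous_cosh).sub Real.continuous_sinh).continuousOn
    · intro x hx
      rw [interior_Ici, Set.mem_Ioi] at hx
      have hd : HasDerivAt (fun x : ℝ => x * Real.cosh x - Real.sinh x) (x * Real.sinh x) x := by
        have := ((hasDerivAt_id x).mul (Real.hasDerivAt_cosh x)).sub (Real.hasDerivAt_sinh x)
        exact this.congr_deriv (by simp [id, mul_comm])
      rw [hd.deriv]
      exact mul_pos hx (Real.sinh_pos_iff.mpr hx)
  have := h (Set.self_mem_Ici) (Set.mem_Ici.mpr hy.le) hy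
  simpa using this



/-- For any switching rate `r > 0`, the steady-state mean oxygen flux
`F = D·(v₀'(0) + v₁'(0))` of the insect-respiration BVP at rate `r` satisfies
`ρ·D·c/L < F < D·c/L`. -/
theorem insect_flux_bounds
    (L D c ρ : ℝ) (hL : 0 < L) (hD : 0 < D) (hc : 0 < c) (hρ : ρ ∈ Set.Ioo (0:ℝ) 1)
    (r : ℝ) (hr : 0 < r) (α β : ℝ) (hα : α = ρ * r) (hβ : β = (1 - ρ) * r)
    (v₀ v₁ : ℝ → ℝ) (a b : ℝ) (ha : a < 0) (hb : L < b)
    (hreg0 : ContDiffOn ℝ 2 v₀ (Set.Ioo a b))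
    (hreg1 : ContDiffOn ℝ 2 v₁ (Set.Ioo a b))
    (hode0 : ∀ x ∈ Set.Icc (0:ℝ) L, D * deriv (deriv v₀) x = β * v₀ x - α * v₁ x)
    (hode1 : ∀ x ∈ Set.Icc (0:ℝ) L, D * deriv (deriv v₁) x = α * v₁ x - β * v₀ x)
    (hbc0 : v₀ 0 = 0) (hbc1 : v₁ 0 = 0)
    (hbc2 : deriv v₁ L = 0) (hbc3 : v₀ L = ρ * c) :
    ρ * D * c / L < D * (deriv v₀ 0 + deriv v₁ 0) ∧
    D * (deriv v₀ 0 + deriv v₁ 0) < D * c / L := by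
  obtain ⟨hρ0, hρ1⟩ := hρ
  have hD' : D ≠ 0 := ne_of_gt hD
  have hopen : IsOpen (Set.Ioo a b) := isOpen_Ioo
  have hsub : Set.Icc (0:ℝ) L ⊆ Set.Ioo a b := fun x hx =>
    ⟨lt_of_lt_of_le ha hx.1, lt_of_le_of_lt hx.2 hb⟩
  -- differentiability facts
  have hdiff0 : ∀ x ∈ Set.Icc (0:ℝ) L, HasDerivAt v₀ (deriv v₀ x) x := by
    intro x hx
    exact ((hreg0.differentiableOn (by norm_num)).differentiableAt
      (hopen.mem_nhds (hsub hx))).hasDerivAt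
  have hdiff1 : ∀ x ∈ Set.Icc (0:ℝ) L, HasDerivAt v₁ (deriv v₁ x) x := by
    intro x hx
    exact ((hreg1.differentiableOn (by norm_num)).differentiableAt
      (hopen.mem_nhds (hsub hx))).hasDerivAt
  have hdd0 : ∀ x ∈ Set.Icc (0:ℝ) L, HasDerivAt (deriv v₀) (deriv (deriv v₀) x) x := by
    intro x hx
    exact (((hreg0.deriv_of_isOpen (m := 1) hopen (by norm_num)).differentiableOn
      (by norm_num)).differentiableAt (hopen.mem_nhds (hsub hx))).hasDerivAt
  have hdd1 : ∀ x ∈ Set.Icc (0:ℝ) L, HasDerivAt (deriv v₁) (deriv (deriv v₁) x) x := by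
    intro x hx
    exact (((hreg1.deriv_of_isOpen (m := 1) hopen (by norm_num)).differentiableOn
      (by norm_num)).differentiableAt (hopen.mem_nhds (hsub hx))).hasDerivAt
  set k : ℝ := Real.sqrt (r / D) with hkdef
  have hk : 0 < k := Real.sqrt_pos.mpr (div_pos hr hD)
  have hk' : k ≠ 0 := ne_of_gt hk
  have hk2 : k * k = r / D := Real.mul_self_sqrt (div_pos hr hD).le
  set m : ℝ := deriv v₀ 0 + deriv v₁ 0 with hmdef
  set B : ℝ := deriv v₁ 0 - (1 - ρ) * m with hBdef
  have h0L : (0:ℝ) ∈ Set.Icc (0:ℝ) L := ⟨le_refl 0, hL.le⟩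
  have hLL : L ∈ Set.Icc (0:ℝ) L := ⟨hL.le, le_refl L⟩
  -- Step 1: deriv v₀ + deriv v₁ is constant = m on [0, L]
  have hstep1 : ∀ x ∈ Set.Icc (0:ℝ) L, deriv v₀ x + deriv v₁ x = m := by
    have := constant_of_has_deriv_right_zero
      (f := fun x => deriv v₀ x + deriv v₁ x) (a := 0) (b := L)
      (fun x hx => ((hdd0 x hx).add (hdd1 x hx)).continuousAt.continuousWithinAt)
      (fun x hx => by
        have hx' : x ∈ Set.Icc (0:ℝ) L := Set.mem_Icc_of_Ico hx
        have h := (hdd0 x hx').add (hdd1 x hx')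
        have hzero : deriv (deriv v₀) x + deriv (deriv v₁) x = 0 := by
          have e0 := hode0 x hx'; have e1 := hode1 x hx'
          have : D * (deriv (deriv v₀) x + deriv (deriv v₁) x) = 0 := by linarith
          exact (mul_eq_zero.mp this).resolve_left hD'
        rw [hzero] at h
        exact h.hasDerivWithinAt)
    intro x hx
    simpa using this x hx
  -- Step 2: v₀ + v₁ = m * x on [0, L]
  have hstep2 : ∀ x ∈ Set.Icc (0:ℝ) L, v₀ x + v₁ x = m * x := by
    have := constant_of_has_deriv_right_zero
      (f := fun x => v₀ x + v₁ x - m * x) (a := 0) (b := L)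
      (fun x hx => (((hdiff0 x hx).add (hdiff1 x hx)).sub
        ((hasDerivAt_id x).const_mul m)).continuousAt.continuousWithinAt)
      (fun x hx => by
        have hx' : x ∈ Set.Icc (0:ℝ) L := Set.mem_Icc_of_Ico hx
        have h := ((hdiff0 x hx').add (hdiff1 x hx')).sub ((hasDerivAt_id x).const_mul m)
        have : deriv v₀ x + deriv v₁ x - m * 1 = 0 := by
          rw [hstep1 x hx']; ring
        rw [this] at h
        exact h.hasDerivWithinAt)
    intro x hx
    have := this x hx
    simp only [hbc0, hbc1, mul_zero] at this
    linarith [this]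
  -- Step 3: ODE for v₁ in closed form
  have hstep3 : ∀ x ∈ Set.Icc (0:ℝ) L,
      deriv (deriv v₁) x = k * k * (v₁ x - (1 - ρ) * m * x) := by
    intro x hx
    have e1 := hode1 x hx
    have e2 := hstep2 x hx
    rw [hk2]
    have hv0 : v₀ x = m * x - v₁ x := by linarith
    rw [hv0, hα, hβ] at e1
    field_simp
    nlinarith [e1]

  -- Step 4: the quantity u = ψ' - kψ times e^{kx} is constant 0
  have hkx : ∀ x : ℝ, HasDerivAt (fun y : ℝ => k*y) k x := fun x => by
    simpa using (hasDerivAt_id x).const_mul k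
  have hstep4 : ∀ x ∈ Set.Icc (0:ℝ) L,
      deriv v₁ x - (1-ρ)*m - B*Real.cosh (k*x) - k * v₁ x + k*((1-ρ)*m)*x
        + B*Real.sinh (k*x) = 0 := by
    have hF : ∀ x ∈ Set.Icc (0:ℝ) L, HasDerivAt
        (fun y => (deriv v₁ y - (1-ρ)*m - B*Real.cosh (k*y) - k * v₁ y + k*((1-ρ)*m)*y
          + B*Real.sinh (k*y)) * Real.exp (k*y)) 0 x := by
      intro x hx
      have h1 : HasDerivAt (fun y => deriv v₁ y - (1-ρ)*m - B*Real.cosh (k*y) - k * v₁ y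
          + k*((1-ρ)*m)*y + B*Real.sinh (k*y))
          (deriv (deriv v₁) x - B*(Real.sinh (k*x)*k) - k * deriv v₁ x + k*((1-ρ)*m)
            + B*(Real.cosh (k*x)*k)) x := by
        have := (((((hdd1 x hx).sub_const ((1-ρ)*m)).sub
          (((hkx x).cosh).const_mul B)).sub ((hdiff1 x hx).const_mul k)).add
          ((hasDerivAt_id x).const_mul (k*((1-ρ)*m)))).add (((hkx x).sinh).const_mul B)
        refine this.congr_deriv ?_
        simp [id]
        try ring
      have h2 := h1.mul ((hkx x).exp)
      have hz : (deriv (deriv v₁) x - B*(Real.sinh (k*x)*k) - k * deriv v₁ x + k*((1-ρ)*m)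
            + B*(Real.cosh (k*x)*k)) * Real.exp (k*x)
          + (deriv v₁ x - (1-ρ)*m - B*Real.cosh (k*x) - k * v₁ x + k*((1-ρ)*m)*x
            + B*Real.sinh (k*x)) * (Real.exp (k*x) * k) = 0 := by
        rw [hstep3 x hx]; ring
      rw [hz] at h2
      exact h2
    have key := constant_of_has_deriv_right_zero (a := 0) (b := L)
      (fun x hx => (hF x hx).continuousAt.continuousWithinAt)
      (fun x hx => (hF x (Set.mem_Icc_of_Ico hx)).hasDerivWithinAt)
    intro x hx
    have h : (deriv v₁ x - (1-ρ)*m - B*Real.cosh (k*x) - k * v₁ x + k*((1-ρ)*m)*x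
          + B*Real.sinh (k*x)) * Real.exp (k*x)
        = (deriv v₁ 0 - (1-ρ)*m - B*Real.cosh (k*0) - k * v₁ 0 + k*((1-ρ)*m)*0
          + B*Real.sinh (k*0)) * Real.exp (k*0) := key x hx
    have hf0 : (deriv v₁ 0 - (1-ρ)*m - B*Real.cosh (k*0) - k * v₁ 0 + k*((1-ρ)*m)*0
          + B*Real.sinh (k*0)) * Real.exp (k*0) = 0 := by
      rw [hBdef]
      simp [hbc1]
    rw [hf0] at h
    rcases mul_eq_zero.mp h with h' | h'
    · exact h'
    · exact absurd h' (Real.exp_ne_zero _)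
  -- Step 5: explicit formula for v₁
  have hstep5 : ∀ x ∈ Set.Icc (0:ℝ) L,
      v₁ x = (1-ρ)*m*x + (B/k)*Real.sinh (k*x) := by
    have hF : ∀ x ∈ Set.Icc (0:ℝ) L, HasDerivAt
        (fun y => (v₁ y - (1-ρ)*m*y - (B/k)*Real.sinh (k*y)) * Real.exp (-(k*y))) 0 x := by
      intro x hx
      have h1 : HasDerivAt (fun y => v₁ y - (1-ρ)*m*y - (B/k)*Real.sinh (k*y))
          (deriv v₁ x - (1-ρ)*m - (B/k)*(Real.cosh (k*x)*k)) x := by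
        have := ((hdiff1 x hx).sub ((hasDerivAt_id x).const_mul ((1-ρ)*m))).sub
          (((hkx x).sinh).const_mul (B/k))
        refine this.congr_deriv ?_
        simp [id]
        try ring
      have h2 := h1.mul (((hkx x).neg).exp)
      have hz : (deriv v₁ x - (1-ρ)*m - (B/k)*(Real.cosh (k*x)*k)) * Real.exp (-(k*x))
          + (v₁ x - (1-ρ)*m*x - (B/k)*Real.sinh (k*x)) * (Real.exp (-(k*x)) * -k) = 0 := by
        have h4 := hstep4 x hx
        have hBk : (B/k)*(Real.cosh (k*x)*k) = B * Real.cosh (k*x) := by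
          field_simp
          try ring
        rw [hBk]
        have hBk2 : (B/k)*Real.sinh (k*x) * k = B * Real.sinh (k*x) := by
          field_simp
        linear_combination Real.exp (-(k*x)) * h4 + Real.exp (-(k*x)) * hBk2
      simp only [Pi.neg_apply] at h2
      rw [hz] at h2
      exact h2
    have key := constant_of_has_deriv_right_zero (a := 0) (b := L)
      (fun x hx => (hF x hx).continuousAt.continuousWithinAt)
      (fun x hx => (hF x (Set.mem_Icc_of_Ico hx)).hasDerivWithinAt)
    intro x hx
    have h : (v₁ x - (1-ρ)*m*x - (B/k)*Real.sinh (k*x)) * Real.exp (-(k*x))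
        = (v₁ 0 - (1-ρ)*m*0 - (B/k)*Real.sinh (k*0)) * Real.exp (-(k*0)) := key x hx
    have hf0 : (v₁ 0 - (1-ρ)*m*0 - (B/k)*Real.sinh (k*0)) * Real.exp (-(k*0)) = 0 := by
      simp [hbc1]
    rw [hf0] at h
    rcases mul_eq_zero.mp h with h' | h'
    · linarith [h']
    · exact absurd h' (Real.exp_ne_zero _)
  -- Step 6: boundary condition at L determines B
  have hcoshpos : 0 < Real.cosh (k*L) := by positivity
  have hBL : B * Real.cosh (k*L) = -((1-ρ)*m) := by
    have h4 := hstep4 L hLL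
    have h5 := hstep5 L hLL
    rw [hbc2, h5] at h4
    have hBk2 : k * ((B/k)*Real.sinh (k*L)) = B * Real.sinh (k*L) := by field_simp
    linear_combination -h4 - hBk2
  -- Step 7: the flux equation
  set T : ℝ := Real.sinh (k*L) / (k * Real.cosh (k*L)) with hTdef
  have hsinhpos : 0 < Real.sinh (k*L) := Real.sinh_pos_iff.mpr (mul_pos hk hL)
  have hT0 : 0 < T := div_pos hsinhpos (mul_pos hk hcoshpos)
  have hTL : T < L := by
    rw [hTdef, div_lt_iff₀ (mul_pos hk hcoshpos)]
    have := sinh_lt_mul_cosh (mul_pos hk hL)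
    nlinarith
  have hc0 : Real.cosh (k*L) ≠ 0 := ne_of_gt hcoshpos
  have hTk : T * (k * Real.cosh (k*L)) = Real.sinh (k*L) := by
    rw [hTdef]; field_simp
  have hBk : (B/k) * k = B := by field_simp
  have h2 := hstep2 L hLL
  rw [hbc3] at h2
  have h5 := hstep5 L hLL
  have hmT : m * (ρ*L + (1-ρ)*T) = ρ * c := by
    linear_combination (-1 : ℝ) * h2 + h5 - (B/k) * hTk + (T * Real.cosh (k*L)) * hBk
      + T * hBL
  -- Step 8: conclude
  have haux1 : 0 < (1-ρ)*T := mul_pos (by linarith) hT0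
  have haux2 : (1-ρ)*T < (1-ρ)*L := by
    have := mul_lt_mul_of_pos_left hTL (show (0:ℝ) < 1-ρ by linarith)
    linarith
  have hden1 : ρ*L < ρ*L + (1-ρ)*T := by linarith
  have hden2 : ρ*L + (1-ρ)*T < L := by linarith
  have hden0 : 0 < ρ*L + (1-ρ)*T := by positivity
  clear hstep1 hstep2 hstep3 hstep4 hstep5 hBL hTk hBk h2 h5 hkx hdiff0 hdiff1 hdd0 hdd1
    hode0 hode1 hreg0 hreg1 hbc0 hbc1 hbc2 hbc3 hsub hopen hk2 hsinhpos hc0 hcoshpos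
    haux1 haux2 hα hβ hkdef hmdef hBdef hTdef hk hk' ha hb h0L hLL
  clear_value k m B T
  clear k B hr hD'
  have hm0 : 0 < m := by
    by_contra h
    push_neg at h
    nlinarith [mul_pos hρ0 hc, mul_nonneg (neg_nonneg.mpr h) hden0.le]
  constructor
  · rw [div_lt_iff₀ hL]
    nlinarith [mul_pos (mul_pos hD hm0) (sub_pos.mpr hden2), hmT]
  · rw [lt_div_iff₀ hL]
    nlinarith [mul_pos (mul_pos hD hm0) (mul_pos (sub_pos.mpr hρ1) hT0), hmT,
      mul_pos hD (mul_pos hm0 (mul_pos (sub_pos.mpr hρ1) hT0))]
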